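/- Let D be a positive integer with D ≡ 1 (mod 4) and set ϖ := (1−D)/4 ∈ ℤ. Let x, y be integers with x ≥ 2, y ≥ 1 and x² + x·y + ϖ·y² = 1, and set g₁ := gcd(x+1, y), g₂ := gcd(x−1, y), P₁ := (2x+y+2)/g₁², P₂ := (2x+y−2)/g₂² (these are integers). Then g₁ divides 2ϖy + x + 1 and P₁ divides (2ϖy + x + 1)/g₁; likewise g₂ divides 2ϖy + x − 1 and P₂ divides (2ϖy + x − 1)/g₂. -/

import Mathlib

lemma aux_key (D varpi P g u t : ℤ) (hDodd : D % 2 = 1) (hv : 4 * varpi = 1 - D)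
    (hco : IsCoprime u t)
    (hsq : P = u^2 + u*t + varpi*t^2 ∨ P = -(u^2 + u*t + varpi*t^2))
    (hdvd : P ∣ D * t^2)
    (h2ut : 2*u + t = g * P) :
    P ∣ u + 2*varpi*t := by
  have hcoQt : IsCoprime (u^2 + u*t + varpi*t^2) t := by
    have h1 : IsCoprime (u^2) t := hco.pow_left
    have h2 := h1.add_mul_left_left (u + varpi*t)
    have : u^2 + t*(u + varpi*t) = u^2 + u*t + varpi*t^2 := by ring
    rwa [this] at h2
  have hcoPt : IsCoprime P t := by
    rcases hsq with h | h
    · rwa [h]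
    · rw [h]; exact hcoQt.neg_left
  have hPDt : P ∣ D * t := by
    have : P ∣ (D*t) * t := by rw [show D*t*t = D*t^2 by ring]; exact hdvd
    exact hcoPt.dvd_of_dvd_mul_right this
  obtain ⟨e, he⟩ := hPDt
  have h2 : 2*(u + 2*varpi*t) = P*(g - e) := by linear_combination h2ut - he + t*hv
  -- P is odd
  have hPodd : Odd P := by
    rcases Int.even_or_odd t with ht | ht
    · have hu : Odd u := by
        rcases Int.even_or_odd u with hu | hu
        · exfalso
          obtain ⟨a, b, hab⟩ := hco
          obtain ⟨u', hu'⟩ := hu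
          obtain ⟨t', ht'⟩ := ht
          have h2 : (2:ℤ) ∣ a*u + b*t := ⟨a*u' + b*t', by rw [hu', ht']; ring⟩
          rw [hab] at h2
          norm_num at h2
        · exact hu
      obtain ⟨m, hm⟩ := hu
      obtain ⟨k, hk⟩ := ht
      have hQ : Odd (u^2 + u*t + varpi*t^2) := by
        refine ⟨2*m^2 + 2*m + 2*m*k + k + varpi*(2*k^2), ?_⟩
        subst hm hk; ring
      rcases hsq with h | h
      · rwa [h]
      · rw [h]; exact hQ.neg
    · have hDt : Odd (D * t) := (Int.odd_iff.mpr hDodd).mul ht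
      rcases Int.even_or_odd P with hP | hP
      · exact absurd (he ▸ hDt) (Int.not_odd_iff_even.mpr (hP.mul_right e))
      · exact hP
  -- conclude: P ∣ 2*m, P odd ⇒ P ∣ m
  have hd2 : (2:ℤ) ∣ P * (g - e) := ⟨u + 2*varpi*t, by linarith⟩
  rcases (Int.prime_two.dvd_mul).mp hd2 with h | h
  · exact absurd h (by have := Int.odd_iff.mp hPodd; omega)
  · obtain ⟨c, hc⟩ := h
    refine ⟨c, ?_⟩
    have : (2:ℤ) * (u + 2*varpi*t) = 2 * (P * c) := by rw [h2, hc]; ring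
    exact mul_left_cancel₀ two_ne_zero this

theorem divisibility_noramanujan
    (D : ℤ) (hD : 0 < D) (hD4 : D % 4 = 1)
    (varpi : ℤ) (hv : 4 * varpi = 1 - D)
    (x y : ℤ) (hx : 2 ≤ x) (hy : 1 ≤ y)
    (hunit : x ^ 2 + x * y + varpi * y ^ 2 = 1)
    (g₁ g₂ P₁ P₂ : ℤ)
    (hg₁ : g₁ = Int.gcd (x + 1) y) (hg₂ : g₂ = Int.gcd (x - 1) y)
    (hP₁ : P₁ = (2 * x + y + 2) / g₁ ^ 2) (hP₂ : P₂ = (2 * x + y - 2) / g₂ ^ 2) :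
    g₁ ∣ 2 * varpi * y + x + 1 ∧
    P₁ ∣ (2 * varpi * y + x + 1) / g₁ ∧
    g₂ ∣ 2 * varpi * y + x - 1 ∧
    P₂ ∣ (2 * varpi * y + x - 1) / g₂ := by
  have hDodd : D % 2 = 1 := by omega
  have hyne : y ≠ 0 := by omega
  -- branch 1 setup
  have hg₁pos : 0 < g₁ := by
    rw [hg₁]
    exact_mod_cast Int.gcd_pos_of_ne_zero_right (x+1) hyne
  have hg₁ne : g₁ ≠ 0 := hg₁pos.ne'
  have hd1 : g₁ ∣ x + 1 := hg₁ ▸ Int.gcd_dvd_left (x+1) y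
  have hd2 : g₁ ∣ y := hg₁ ▸ Int.gcd_dvd_right (x+1) y
  obtain ⟨u, hu⟩ := hd1
  obtain ⟨t, ht⟩ := hd2
  have hco : IsCoprime u t := by
    rw [Int.isCoprime_iff_gcd_eq_one]
    have h := Int.gcd_div_gcd_div_gcd (Int.gcd_pos_of_ne_zero_right (x+1) hyne)
    rw [← hg₁] at h
    rwa [hu, ht, Int.mul_ediv_cancel_left _ hg₁ne, Int.mul_ediv_cancel_left _ hg₁ne] at h
  have hB : 2*x + y + 2 = g₁^2 * (u^2 + u*t + varpi*t^2) := by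
    linear_combination -hunit + (x+1+g₁*u+g₁*t)*hu + (x+1+varpi*(y+g₁*t))*ht
  have hP₁Q : P₁ = u^2 + u*t + varpi*t^2 := by
    rw [hP₁, hB, Int.mul_ediv_cancel_left _ (pow_ne_zero 2 hg₁ne)]
  have hPell : (2*x+y+2)*(2*x+y-2) = D*y^2 := by
    linear_combination 4*hunit - y^2*hv
  have hQDt2 : (u^2 + u*t + varpi*t^2) ∣ D*t^2 := by
    have hcan : g₁^2 * ((u^2 + u*t + varpi*t^2)*(2*x+y-2)) = g₁^2 * (D*t^2) := by
      linear_combination hPell - (2*x+y-2)*hB + D*(y+g₁*t)*ht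
    exact ⟨_, (mul_left_cancel₀ (pow_ne_zero 2 hg₁ne) hcan).symm⟩
  have h2ut : 2*u + t = g₁ * (u^2 + u*t + varpi*t^2) := by
    have hcan : g₁ * (2*u+t) = g₁ * (g₁ * (u^2 + u*t + varpi*t^2)) := by
      linear_combination hB - 2*hu - ht
    exact mul_left_cancel₀ hg₁ne hcan
  have hkey1 := aux_key D varpi (u^2 + u*t + varpi*t^2) g₁ u t hDodd hv hco
    (Or.inl rfl) hQDt2 h2ut
  have heqA : 2*varpi*y + x + 1 = g₁ * (u + 2*varpi*t) := by
    linear_combination hu + 2*varpi*ht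
  refine ⟨⟨u + 2*varpi*t, heqA⟩, ?_, ?_, ?_⟩
  · rw [heqA, Int.mul_ediv_cancel_left _ hg₁ne, hP₁Q]
    exact hkey1
  all_goals clear hco hB hP₁Q hQDt2 h2ut hkey1 heqA hu ht hP₁ hg₁ hg₁pos hg₁ne
  -- branch 2
  all_goals (
    have hg₂pos : 0 < g₂ := by
      rw [hg₂]
      exact_mod_cast Int.gcd_pos_of_ne_zero_right (x-1) hyne
    have hg₂ne : g₂ ≠ 0 := hg₂pos.ne'
    obtain ⟨u₂, hu₂⟩ : g₂ ∣ x - 1 := hg₂ ▸ Int.gcd_dvd_left (x-1) y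
    obtain ⟨t₂, ht₂⟩ : g₂ ∣ y := hg₂ ▸ Int.gcd_dvd_right (x-1) y
    have hco₂ : IsCoprime u₂ t₂ := by
      rw [Int.isCoprime_iff_gcd_eq_one]
      have h := Int.gcd_div_gcd_div_gcd (Int.gcd_pos_of_ne_zero_right (x-1) hyne)
      rw [← hg₂] at h
      rwa [hu₂, ht₂, Int.mul_ediv_cancel_left _ hg₂ne, Int.mul_ediv_cancel_left _ hg₂ne] at h
    have hB₂ : 2*x + y - 2 = g₂^2 * (-(u₂^2 + u₂*t₂ + varpi*t₂^2)) := by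
      linear_combination hunit - (x-1+g₂*u₂+g₂*t₂)*hu₂ - (x-1+varpi*(y+g₂*t₂))*ht₂
    have heqA₂ : 2*varpi*y + x - 1 = g₂ * (u₂ + 2*varpi*t₂) := by
      linear_combination hu₂ + 2*varpi*ht₂)
  · exact ⟨u₂ + 2*varpi*t₂, heqA₂⟩
  · have hP₂Q : P₂ = -(u₂^2 + u₂*t₂ + varpi*t₂^2) := by
      rw [hP₂, hB₂, Int.mul_ediv_cancel_left _ (pow_ne_zero 2 hg₂ne)]
    have hPell : (2*x+y+2)*(2*x+y-2) = D*y^2 := by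
      linear_combination 4*hunit - y^2*hv
    have hQDt2 : (-(u₂^2 + u₂*t₂ + varpi*t₂^2)) ∣ D*t₂^2 := by
      have hcan : g₂^2 * ((-(u₂^2 + u₂*t₂ + varpi*t₂^2))*(2*x+y+2)) = g₂^2 * (D*t₂^2) := by
        linear_combination hPell - (2*x+y+2)*hB₂ + D*(y+g₂*t₂)*ht₂
      exact ⟨_, (mul_left_cancel₀ (pow_ne_zero 2 hg₂ne) hcan).symm⟩
    have h2ut₂ : 2*u₂ + t₂ = g₂ * (-(u₂^2 + u₂*t₂ + varpi*t₂^2)) := by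
      have hcan : g₂ * (2*u₂+t₂) = g₂ * (g₂ * (-(u₂^2 + u₂*t₂ + varpi*t₂^2))) := by
        linear_combination hB₂ - 2*hu₂ - ht₂
      exact mul_left_cancel₀ hg₂ne hcan
    have hkey2 := aux_key D varpi (-(u₂^2 + u₂*t₂ + varpi*t₂^2)) g₂ u₂ t₂ hDodd hv hco₂
      (Or.inr rfl) hQDt2 h2ut₂
    rw [heqA₂, Int.mul_ediv_cancel_left _ hg₂ne, hP₂Q]
    exact hkey2
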